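/- Let G be a finite connected simple graph, T a spanning tree of G, and B a nontrivial biconnected component of G with vertex set V_B. Then T[V_B], the subgraph of T induced by V_B, is a spanning tree of B: it is a tree, it is a subgraph of B, and its vertex set is all of V_B. -/

import Mathlib

open SimpleGraph

/-- `H` is a biconnected subgraph of `G`: it is connected and has no cut vertex,
i.e. removing any single vertex leaves it connected. -/
def IsBiconnected {V : Type} (G : SimpleGraph V) (H : G.Subgraph) : Prop :=
  H.coe.Connected ∧ ∀ v ∈ H.verts, ((H.deleteVerts {v}).coe).Connected

/-- `H` is a biconnected component (block) of `G`: a maximal biconnected subgraph. -/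
def IsBiconnectedComponent {V : Type} (G : SimpleGraph V) (H : G.Subgraph) : Prop :=
  IsBiconnected G H ∧ ∀ H' : G.Subgraph, IsBiconnected G H' → H ≤ H' → H' = H

namespace BlockAux

variable {V : Type} {G : SimpleGraph V}

lemma deleteVerts_sup (H K : G.Subgraph) (s : Set V) :
    (H ⊔ K).deleteVerts s = H.deleteVerts s ⊔ K.deleteVerts s := by
  ext x y
  · simp only [Subgraph.deleteVerts_verts, Subgraph.verts_sup, Set.union_diff_distrib,
      Set.mem_union]
  · simp only [Subgraph.deleteVerts_adj, Subgraph.sup_adj, Subgraph.verts_sup, Set.mem_union]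
    constructor
    · rintro ⟨hx, hxs, hy, hys, (h | h)⟩
      · exact Or.inl ⟨h.fst_mem, hxs, h.snd_mem, hys, h⟩
      · exact Or.inr ⟨h.fst_mem, hxs, h.snd_mem, hys, h⟩
    · rintro (⟨hx, hxs, hy, hys, h⟩ | ⟨hx, hxs, hy, hys, h⟩)
      · exact ⟨Or.inl hx, hxs, Or.inl hy, hys, Or.inl h⟩
      · exact ⟨Or.inr hx, hxs, Or.inr hy, hys, Or.inr h⟩

lemma deleteVerts_eq_self {H : G.Subgraph} {s : Set V} (h : ∀ x ∈ s, x ∉ H.verts) :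
    H.deleteVerts s = H := by
  have hint : H.verts ∩ s = ∅ := by
    ext x
    simp only [Set.mem_inter_iff, Set.mem_empty_iff_false, iff_false, not_and]
    exact fun hx hs => h x hs hx
  rw [← Subgraph.deleteVerts_inter_verts_left_eq, hint, Subgraph.deleteVerts_empty]

lemma cons_toSubgraph_deleteVerts {x z y : V} (h : G.Adj x z) (r : G.Walk z y)
    (hx : x ∉ r.support) :
    (Walk.cons h r).toSubgraph.deleteVerts {x} = r.toSubgraph := by
  have hmem : ∀ {a b : V}, r.toSubgraph.Adj a b → a ∈ r.support :=
    fun hab => r.mem_verts_toSubgraph.mp hab.fst_mem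
  ext a b
  · simp only [Subgraph.deleteVerts_verts, Walk.toSubgraph, Subgraph.verts_sup,
      subgraphOfAdj_verts, Set.mem_diff, Set.mem_union, Set.mem_insert_iff,
      Set.mem_singleton_iff, Walk.mem_verts_toSubgraph]
    constructor
    · rintro ⟨(⟨rfl | rfl⟩ | ha), hax⟩
      · exact absurd rfl hax
      · exact r.start_mem_support
      · exact ha
    · intro ha
      exact ⟨Or.inr ha, fun hax => hx (hax ▸ ha)⟩
  · simp only [Subgraph.deleteVerts_adj, Walk.toSubgraph, Subgraph.sup_adj, subgraphOfAdj_adj,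
      Subgraph.verts_sup, subgraphOfAdj_verts, Set.mem_union, Set.mem_insert_iff,
      Set.mem_singleton_iff, Set.mem_singleton_iff, Walk.mem_verts_toSubgraph, Sym2.eq,
      Sym2.rel_iff', Prod.mk.injEq, Prod.swap_prod_mk]
    constructor
    · rintro ⟨hav, hax, hbv, hbx, ((⟨rfl, rfl⟩ | ⟨rfl, rfl⟩) | hadj)⟩
      · exact absurd rfl hax
      · exact absurd rfl hbx
      · exact hadj
    · intro hadj
      refine ⟨Or.inr (hmem hadj), fun hax => hx (hax ▸ hmem hadj), Or.inr (hmem hadj.symm),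
        fun hbx => hx (hbx ▸ hmem hadj.symm), Or.inr hadj⟩

lemma del_endpoint {B : G.Subgraph}
    (hBdel : ∀ v ∈ B.verts, ((B.deleteVerts {v}).coe).Connected)
    {a b : V} (ha : a ∈ B.verts) (hb : b ∈ B.verts) (hab : a ≠ b)
    (q : G.Walk a b) (hq : q.IsPath) :
    (B.deleteVerts {a} ⊔ q.toSubgraph.deleteVerts {a}).Connected := by
  obtain ⟨w, h, r, hr⟩ := Walk.not_nil_iff.mp (Walk.not_nil_of_ne (p := q) hab)
  have hx : a ∉ r.support := by
    have hq' := hq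
    rw [hr, Walk.cons_isPath_iff] at hq'
    exact hq'.2
  rw [hr, cons_toSubgraph_deleteVerts h r hx]
  refine Subgraph.connected_sup (Subgraph.connected_iff'.mpr (hBdel a ha)).preconnected r.toSubgraph_connected.preconnected ⟨b, ?_, ?_⟩
  · exact ⟨hb, fun hba => hab (Set.mem_singleton_iff.mp hba).symm⟩
  · exact r.end_mem_verts_toSubgraph

lemma ear_biconnected {B : G.Subgraph} (hB : IsBiconnected G B)
    {a b : V} (ha : a ∈ B.verts) (hb : b ∈ B.verts) (hab : a ≠ b)
    (q : G.Walk a b) (hq : q.IsPath)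
    (hint : ∀ w ∈ q.support, w ≠ a → w ≠ b → w ∉ B.verts) :
    IsBiconnected G (B ⊔ q.toSubgraph) := by
  classical
  obtain ⟨hBconn, hBdel⟩ := hB
  have hBconn' : B.Connected := Subgraph.connected_iff'.mpr hBconn
  refine ⟨?_, ?_⟩
  · exact (Subgraph.connected_sup hBconn'.preconnected q.toSubgraph_connected.preconnected ⟨a, ha, q.start_mem_verts_toSubgraph⟩).coe
  · intro v hv
    rw [deleteVerts_sup]
    by_cases hva : v = a
    · subst hva
      exact (del_endpoint hBdel ha hb hab q hq).coe
    by_cases hvb : v = b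
    · subst hvb
      rw [← Walk.toSubgraph_reverse]
      exact (del_endpoint hBdel hb ha (Ne.symm hab) q.reverse hq.reverse).coe
    by_cases hvB : v ∈ B.verts
    · have hvq : v ∉ q.support := fun hs => (hint v hs hva hvb) hvB
      rw [deleteVerts_eq_self (H := q.toSubgraph)
        (by intro x hx hxv; exact hvq ((Set.mem_singleton_iff.mp hx) ▸
          q.mem_verts_toSubgraph.mp hxv))]
      refine (Subgraph.connected_sup (Subgraph.connected_iff'.mpr (hBdel v hvB)).preconnected q.toSubgraph_connected.preconnected
        ⟨a, ⟨ha, fun h => hva (Set.mem_singleton_iff.mp h).symm⟩,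
          q.start_mem_verts_toSubgraph⟩).coe
    · -- v is an interior vertex of the ear
      have hvq : v ∈ q.support := by
        rcases hv with h | h
        · exact absurd h hvB
        · exact q.mem_verts_toSubgraph.mp h
      rw [deleteVerts_eq_self (H := B)
        (fun x hx => (Set.mem_singleton_iff.mp hx) ▸ hvB)]
      have hq1 : (q.takeUntil v hvq).IsPath := hq.takeUntil hvq
      have hq2 : (q.dropUntil v hvq).IsPath := hq.dropUntil hvq
      obtain ⟨w2, h2, r2, hr2⟩ :=
        Walk.not_nil_iff.mp (Walk.not_nil_of_ne (p := q.dropUntil v hvq) (fun h => hvb h))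
      obtain ⟨w1, h1, r1, hr1⟩ :=
        Walk.not_nil_iff.mp
          (Walk.not_nil_of_ne (p := (q.takeUntil v hvq).reverse) (fun h => hva h))
      have hv1 : v ∉ r1.support := by
        have hp := hq1.reverse
        rw [hr1, Walk.cons_isPath_iff] at hp
        exact hp.2
      have hv2 : v ∉ r2.support := by
        have hp := hq2
        rw [hr2, Walk.cons_isPath_iff] at hp
        exact hp.2
      have e1 : (q.takeUntil v hvq).toSubgraph.deleteVerts {v} = r1.toSubgraph := by
        rw [← Walk.toSubgraph_reverse, hr1, cons_toSubgraph_deleteVerts h1 r1 hv1]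
      have e2 : (q.dropUntil v hvq).toSubgraph.deleteVerts {v} = r2.toSubgraph := by
        rw [hr2, cons_toSubgraph_deleteVerts h2 r2 hv2]
      rw [← q.take_spec hvq, Walk.toSubgraph_append, deleteVerts_sup, e1, e2, ← sup_assoc]
      refine (Subgraph.connected_sup (Subgraph.connected_sup hBconn'.preconnected r1.toSubgraph_connected.preconnected
        ⟨a, ha, r1.end_mem_verts_toSubgraph⟩).preconnected r2.toSubgraph_connected.preconnected
        ⟨b, Or.inl hb, r2.end_mem_verts_toSubgraph⟩).coe

lemma exists_split {T : SimpleGraph V} (S : Set V) :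
    ∀ {x v : V} (q : T.Walk x v), v ∈ S →
    ∃ (c : V) (_ : c ∈ S) (q1 : T.Walk x c) (q2 : T.Walk c v),
      q = q1.append q2 ∧ ∀ w ∈ q1.support, w ≠ c → w ∉ S := by
  intro x v q hv
  induction q with
  | nil =>
    exact ⟨_, hv, Walk.nil, Walk.nil, rfl, by
      intro w hw hne
      rw [Walk.support_nil] at hw
      exact absurd (List.mem_singleton.mp hw) hne⟩
  | @cons u m w' h r ih =>
    by_cases hu : u ∈ S
    · exact ⟨u, hu, Walk.nil, Walk.cons h r, rfl, by
        intro w hw hne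
        rw [Walk.support_nil] at hw
        exact absurd (List.mem_singleton.mp hw) hne⟩
    · obtain ⟨c, hc, q1, q2, heq, hcond⟩ := ih hv
      refine ⟨c, hc, Walk.cons h q1, q2, by rw [Walk.cons_append, heq], ?_⟩
      intro w hw hne
      rw [Walk.support_cons] at hw
      rcases List.mem_cons.mp hw with rfl | hw
      · exact hu
      · exact hcond w hw hne

lemma reachable_induce {T : SimpleGraph V} {s : Set V} :
    ∀ {x y : V} (p : T.Walk x y), (∀ w ∈ p.support, w ∈ s) → ∀ (hx : x ∈ s) (hy : y ∈ s),
      (T.induce s).Reachable ⟨x, hx⟩ ⟨y, hy⟩ := by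
  intro x y p
  induction p with
  | nil =>
    intro _ hx hy
    exact Reachable.refl _
  | @cons u m w h r ih =>
    intro hs hx hy
    have hm : m ∈ s := hs m (by simp)
    have hs' : ∀ z ∈ r.support, z ∈ s := fun z hz => hs z (by
      rw [Walk.support_cons]
      exact List.mem_cons_of_mem _ hz)
    have hadj : (T.induce s).Adj ⟨u, hx⟩ ⟨m, hm⟩ := h
    exact hadj.reachable.trans (ih hs' hm hy)

end BlockAux

open BlockAux in
/-- Let `G` be a finite connected simple graph, `T` a spanning tree
of `G`, and `B` a nontrivial biconnected component of `G` with vertex set `V_B`.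
Then `T[V_B]`, the subgraph of `T` induced by `V_B`, is a spanning tree of `B`:
it is a tree (on all of the vertex set `V_B`), and it is a subgraph of `B`. -/
theorem induced_subtree_spanning_tree_of_block {V : Type} [Fintype V]
    (G : SimpleGraph V) (hG : G.Connected)
    (T : SimpleGraph V) (hTG : T ≤ G) (hT : T.IsTree)
    (B : G.Subgraph) (hB : IsBiconnectedComponent G B)
    (hBnontriv : 3 ≤ B.verts.ncard) :
    (T.induce B.verts).IsTree ∧ T.induce B.verts ≤ B.coe := by
  classical
  obtain ⟨hBbic, hBmax⟩ := hB
  -- any path in `G` between vertices of `B` whose interior avoids `B` is contained in `B`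
  have hsub : ∀ {x y : V} (p : G.Walk x y), x ∈ B.verts → y ∈ B.verts → x ≠ y → p.IsPath →
      (∀ w ∈ p.support, w ≠ x → w ≠ y → w ∉ B.verts) → p.toSubgraph ≤ B := by
    intro x y p hx hy hxy hp hint
    have h1 := ear_biconnected hBbic hx hy hxy p hp hint
    have h2 := hBmax _ h1 le_sup_left
    calc p.toSubgraph ≤ B ⊔ p.toSubgraph := le_sup_right
    _ = B := h2
  -- tree paths between vertices of `B` stay inside `B`
  have key : ∀ (n : ℕ) {x y : V}, x ∈ B.verts → y ∈ B.verts → ∀ (p : T.Walk x y),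
      p.IsPath → p.length ≤ n → ∀ w ∈ p.support, w ∈ B.verts := by
    intro n
    induction n with
    | zero =>
      intro x y hx hy p hp hlen w hw
      cases p with
      | nil =>
        simp only [Walk.support_nil, List.mem_singleton] at hw
        exact hw ▸ hx
      | cons h r => simp at hlen
    | succ n ih =>
      intro x y hx hy p hp hlen w hw
      cases p with
      | nil =>
        simp only [Walk.support_nil, List.mem_singleton] at hw
        exact hw ▸ hx
      | @cons x m y h r =>
        by_cases hm : m ∈ B.verts
        · rw [Walk.support_cons] at hw
          rcases List.mem_cons.mp hw with rfl | hw
          · exact hx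
          · exact ih hm hy r hp.of_cons (by
              rw [Walk.length_cons] at hlen
              omega) w hw
        · exfalso
          obtain ⟨c, hc, q1, q2, heq, hcond⟩ := exists_split B.verts r hy
          have hxr : x ∉ r.support := (Walk.cons_isPath_iff h r).mp hp |>.2
          have hq1sub : ∀ z ∈ q1.support, z ∈ r.support := by
            intro z hz
            rw [heq, Walk.mem_support_append_iff]
            exact Or.inl hz
          have hq1path : (Walk.cons h q1).IsPath := by
            rw [Walk.cons_isPath_iff]
            refine ⟨?_, fun hxs => hxr (hq1sub x hxs)⟩
            have : (q1.append q2).IsPath := heq ▸ hp.of_cons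
            exact this.of_append_left
          have hxc : x ≠ c := by
            intro hco
            exact hxr (hq1sub x (hco ▸ q1.end_mem_support))
          -- map the ear to `G`
          set e : G.Walk x c := (Walk.cons h q1).mapLe hTG with he
          have hesupp : e.support = x :: q1.support := by
            rw [he]
            have hid : ⇑(Hom.ofLE hTG) = id := rfl
            simp [Walk.support_map, hid]
          have hepath : e.IsPath := hq1path.mapLe _
          have hintr : ∀ w ∈ e.support, w ≠ x → w ≠ c → w ∉ B.verts := by
            intro w hw hwx hwc
            rw [hesupp] at hw
            rcases List.mem_cons.mp hw with rfl | hw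
            · exact absurd rfl hwx
            · exact hcond w hw hwc
          have hle := hsub e hx hc hxc hepath hintr
          have hmine : m ∈ e.toSubgraph.verts := by
            rw [e.mem_verts_toSubgraph, hesupp]
            exact List.mem_cons_of_mem _ q1.start_mem_support
          exact hm (hle.1 hmine)
  -- tree edges between vertices of `B` are edges of `B`
  have hedge : ∀ {x y : V}, x ∈ B.verts → y ∈ B.verts → T.Adj x y → B.Adj x y := by
    intro x y hx hy hadjT
    have hadj : G.Adj x y := hTG hadjT
    have hpath : (Walk.cons hadj Walk.nil).IsPath := by
      rw [Walk.cons_isPath_iff]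
      refine ⟨Walk.IsPath.nil, ?_⟩
      simp [hadj.ne]
    have hle := hsub (Walk.cons hadj Walk.nil) hx hy hadj.ne hpath (by
      intro w hw hwx hwy
      simp only [Walk.support_cons, Walk.support_nil, List.mem_cons,
        List.not_mem_nil, or_false] at hw
      rcases hw with rfl | rfl
      · exact absurd rfl hwx
      · exact absurd rfl hwy)
    refine hle.2 ?_
    simp [Walk.toSubgraph]
  have hconn : (T.induce B.verts).Connected := by
    have hne : B.verts.Nonempty := by
      rcases Set.eq_empty_or_nonempty B.verts with h | h
      · rw [h] at hBnontriv
        simp [Set.ncard_empty] at hBnontriv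
      · exact h
    have : Nonempty ↥B.verts := hne.to_subtype
    refine ⟨?_⟩
    rintro ⟨x, hx⟩ ⟨y, hy⟩
    obtain ⟨p0⟩ := hT.isConnected.preconnected x y
    exact reachable_induce p0.bypass
      (key p0.bypass.length hx hy p0.bypass p0.bypass_isPath le_rfl) hx hy
  have hacyc : (T.induce B.verts).IsAcyclic := by
    intro v c hc
    exact hT.IsAcyclic _
      ((Walk.map_isCycle_iff_of_injective
        (f := (Embedding.induce B.verts (G := T)).toHom) Subtype.val_injective).mpr hc)
  refine ⟨⟨hconn, hacyc⟩, ?_⟩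
  rintro ⟨x, hx⟩ ⟨y, hy⟩ hadj
  exact hedge hx hy hadj
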